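/- The upper asymptotic density of F equals 1/3. -/

import Mathlib

open Filter Topology

def F : Set ℕ := {n | ∃ k, 3 * 4 ^ k ≤ n ∧ n < 4 ^ (k + 1)}

lemma F_sub {n k : ℕ} (hn : n ∈ F) (h1 : 4 ^ k ≤ n) (h2 : n < 4 ^ (k + 1)) :
    3 * 4 ^ k ≤ n := by
  obtain ⟨j, hj1, hj2⟩ := hn
  have hjn : 4 ^ j ≤ n := le_trans (by nlinarith [Nat.pow_pos (n := j) (by norm_num : 0 < 4)]) hj1
  have hjk : j ≤ k := by
    have : (4:ℕ) ^ j < 4 ^ (k+1) := lt_of_le_of_lt hjn h2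
    have := (Nat.pow_lt_pow_iff_right (by norm_num : 1 < 4)).mp this
    omega
  have hkj : k ≤ j := by
    have : (4:ℕ) ^ k < 4 ^ (j+1) := lt_of_le_of_lt h1 hj2
    have := (Nat.pow_lt_pow_iff_right (by norm_num : 1 < 4)).mp this
    omega
  have hjk' : j = k := le_antisymm hjk hkj
  subst hjk'
  exact hj1

lemma F_low {k N : ℕ} (h1 : 4 ^ k ≤ N) (h2 : N ≤ 3 * 4 ^ k) :
    F ∩ Set.Iio N = F ∩ Set.Iio (4 ^ k) := by
  ext n
  simp only [Set.mem_inter_iff, Set.mem_Iio]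
  constructor
  · rintro ⟨hF, hn⟩
    refine ⟨hF, ?_⟩
    by_contra h
    push_neg at h
    have hlt : n < 4 ^ (k+1) := by
      have : (4:ℕ) ^ k ≤ 4 ^ (k+1) := Nat.pow_le_pow_right (by norm_num) (by omega)
      have h4 : 3 * 4 ^ k < 4 ^ (k+1) := by
        have : (4:ℕ) ^ (k+1) = 4 * 4 ^ k := by ring
        nlinarith [Nat.pow_pos (n := k) (by norm_num : 0 < 4)]
      omega
    have := F_sub hF h hlt
    omega
  · rintro ⟨hF, hn⟩
    exact ⟨hF, by omega⟩

lemma F_high {k N : ℕ} (h1 : 3 * 4 ^ k ≤ N) (h2 : N ≤ 4 ^ (k + 1)) :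
    F ∩ Set.Iio N = (F ∩ Set.Iio (4 ^ k)) ∪ Set.Ico (3 * 4 ^ k) N := by
  have hpos : 0 < (4:ℕ) ^ k := Nat.pow_pos (n := k) (by norm_num)
  ext n
  simp only [Set.mem_inter_iff, Set.mem_Iio, Set.mem_union, Set.mem_Ico]
  constructor
  · rintro ⟨hF, hn⟩
    by_cases h : n < 4 ^ k
    · exact Or.inl ⟨hF, h⟩
    · push_neg at h
      have := F_sub hF h (by omega)
      exact Or.inr ⟨this, hn⟩
  · rintro (⟨hF, hn⟩ | ⟨h1', h2'⟩)
    · exact ⟨hF, by omega⟩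
    · refine ⟨⟨k, h1', by omega⟩, h2'⟩

lemma F_fin (N : ℕ) : (F ∩ Set.Iio N).Finite :=
  (Set.finite_Iio N).inter_of_right F

lemma ncard_Ico' (a b : ℕ) : (Set.Ico a b).ncard = b - a := by
  rw [← Finset.coe_Ico, Set.ncard_coe_finset, Nat.card_Ico]

lemma count_pow (k : ℕ) : 3 * (F ∩ Set.Iio (4 ^ k)).ncard + 1 = 4 ^ k := by
  induction k with
  | zero =>
    have : F ∩ Set.Iio (4 ^ 0) = ∅ := by
      ext n
      simp only [pow_zero, Set.mem_inter_iff, Set.mem_Iio, Set.mem_empty_iff_false, iff_false]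
      rintro ⟨⟨j, hj1, _⟩, hn⟩
      have := Nat.pow_pos (n := j) (by norm_num : 0 < 4)
      omega
    rw [this]
    simp
  | succ k ih =>
    have hpos : 0 < (4:ℕ) ^ k := Nat.pow_pos (n := k) (by norm_num)
    have h4 : (4:ℕ) ^ (k+1) = 4 * 4 ^ k := by ring
    have heq := F_high (k := k) (N := 4 ^ (k+1)) (by omega) le_rfl
    have hdisj : Disjoint (F ∩ Set.Iio (4 ^ k)) (Set.Ico (3 * 4 ^ k) (4 ^ (k+1))) := by
      rw [Set.disjoint_left]
      rintro n ⟨_, hn⟩ hn2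
      simp only [Set.mem_Iio] at hn
      simp only [Set.mem_Ico] at hn2
      omega
    rw [heq, Set.ncard_union_eq hdisj (F_fin _) (Set.finite_Ico _ _), ncard_Ico']
    omega

lemma count_le (N : ℕ) : 3 * (F ∩ Set.Iio N).ncard ≤ N := by
  rcases Nat.eq_zero_or_pos N with rfl | hN
  · have : Set.Iio (0:ℕ) = ∅ := by ext n; simp
    simp [this]
  set k := Nat.log 4 N with hk
  have h1 : 4 ^ k ≤ N := Nat.pow_log_le_self 4 (by omega)
  have h2 : N < 4 ^ (k + 1) := Nat.lt_pow_succ_log_self (by norm_num) N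
  have hpos : 0 < (4:ℕ) ^ k := Nat.pow_pos (n := k) (by norm_num)
  have h4 : (4:ℕ) ^ (k+1) = 4 * 4 ^ k := by ring
  have hc := count_pow k
  by_cases h : N ≤ 3 * 4 ^ k
  · rw [F_low h1 h]
    omega
  · push_neg at h
    rw [F_high (le_of_lt h) (le_of_lt h2)]
    have hdisj : Disjoint (F ∩ Set.Iio (4 ^ k)) (Set.Ico (3 * 4 ^ k) N) := by
      rw [Set.disjoint_left]
      rintro n ⟨_, hn⟩ hn2
      simp only [Set.mem_Iio] at hn
      simp only [Set.mem_Ico] at hn2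
      omega
    rw [Set.ncard_union_eq hdisj (F_fin _) (Set.finite_Ico _ _), ncard_Ico']
    omega

theorem stmt_6 :
    Filter.limsup (fun N : ℕ => ((F ∩ Set.Iio N).ncard : ℝ) / N) Filter.atTop = 1 / 3 := by
  set f : ℕ → ℝ := fun N => ((F ∩ Set.Iio N).ncard : ℝ) / N with hf
  have hub : ∀ N, f N ≤ 1 / 3 := by
    intro N
    rcases Nat.eq_zero_or_pos N with rfl | hN
    · simp [hf]
    have h := count_le N
    have hNpos : (0:ℝ) < N := by exact_mod_cast hN
    rw [hf, div_le_div_iff₀ hNpos (by norm_num)]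
    have : (3 * (F ∩ Set.Iio N).ncard : ℝ) ≤ N := by exact_mod_cast h
    linarith
  have hlb0 : ∀ N, 0 ≤ f N := fun N => div_nonneg (Nat.cast_nonneg _) (Nat.cast_nonneg _)
  have hbdd : IsBoundedUnder (· ≤ ·) atTop f :=
    isBoundedUnder_of ⟨1/3, fun N => hub N⟩
  have hcobdd : IsCoboundedUnder (· ≤ ·) atTop f :=
    IsBoundedUnder.isCoboundedUnder_le (isBoundedUnder_of ⟨0, fun N => hlb0 N⟩)
  have hle : Filter.limsup f atTop ≤ 1 / 3 :=
    limsup_le_of_le hcobdd (Eventually.of_forall hub)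
  have hge : (1:ℝ) / 3 ≤ Filter.limsup f atTop := by
    -- f (4^(k+1)) = 1/3 - 1/(3 * 4^(k+1)), tends to 1/3
    have hval : ∀ k : ℕ, f (4 ^ (k+1)) = 1/3 - 1/(3 * 4^(k+1)) := by
      intro k
      have hc := count_pow (k+1)
      have hcR : (3:ℝ) * ((F ∩ Set.Iio (4 ^ (k+1))).ncard : ℝ) + 1 = 4 ^ (k+1) := by
        exact_mod_cast hc
      have hpos : (0:ℝ) < 4 ^ (k+1) := by positivity
      have hcard : ((F ∩ Set.Iio (4 ^ (k+1))).ncard : ℝ) = (4^(k+1) - 1)/3 := by linarith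
      rw [hf]
      push_cast
      rw [hcard]
      field_simp
    have htend : Tendsto (fun k : ℕ => f (4 ^ (k+1))) atTop (𝓝 (1/3)) := by
      simp_rw [hval]
      have h1 : Tendsto (fun k : ℕ => (1:ℝ)/(3 * 4^(k+1))) atTop (𝓝 0) := by
        have : Tendsto (fun k : ℕ => (3:ℝ) * 4^(k+1)) atTop atTop := by
          apply Tendsto.const_mul_atTop (by norm_num : (0:ℝ) < 3)
          exact (tendsto_pow_atTop_atTop_of_one_lt (by norm_num : (1:ℝ) < 4)).comp
            (tendsto_add_atTop_nat 1)
        have h2 : Tendsto (fun k : ℕ => ((3:ℝ) * 4^(k+1))⁻¹) atTop (𝓝 0) :=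
          tendsto_inv_atTop_zero.comp this
        exact h2.congr (fun k => (one_div _).symm)
      have := (tendsto_const_nhds (x := (1:ℝ)/3)).sub h1
      simpa using this
    apply le_of_forall_sub_le
    intro ε hε
    apply le_limsup_of_frequently_le _ hbdd
    have hmono : Tendsto (fun k : ℕ => (4:ℕ) ^ (k+1)) atTop atTop :=
      (tendsto_pow_atTop_atTop_of_one_lt (by norm_num : (1:ℕ) < 4)).comp (tendsto_add_atTop_nat 1)
    have hev : ∀ᶠ k in atTop, 1/3 - ε ≤ f (4 ^ (k+1)) := by
      filter_upwards [htend.eventually (eventually_ge_nhds (by linarith : (1:ℝ)/3 - ε < 1/3))]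
        with k hk using hk
    exact hmono.frequently hev.frequently
  linarith
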